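/- Let S be finite, q ∈ Δ(S), and let V̄, V̲, V* : S → [0,H] satisfy V̲(s) ≤ V*(s) ≤ V̄(s) for all s. Then |Var_q[(V̄ + V̲)/2] − Var_q[V*]| ≤ 4H · E_q[V̄ − V̲]. -/
import Mathlib


open Finset Real

/-- Variance of the midpoint of sandwiching value functions is close to the
variance of the sandwiched function. -/
theorem variance_midpoint_sandwich {S : Type*} [Fintype S]
    (q : S → ℝ) (hq0 : ∀ s, 0 ≤ q s) (hq1 : ∑ s, q s = 1)
    (H : ℝ) (hH : 0 < H)
    (Vup Vlo Vstar : S → ℝ)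
    (hup : ∀ s, Vup s ∈ Set.Icc 0 H) (hlo : ∀ s, Vlo s ∈ Set.Icc 0 H)
    (hstar : ∀ s, Vstar s ∈ Set.Icc 0 H)
    (hsand : ∀ s, Vlo s ≤ Vstar s ∧ Vstar s ≤ Vup s) :
    |((∑ s, q s * ((Vup s + Vlo s) / 2) ^ 2) - (∑ s, q s * ((Vup s + Vlo s) / 2)) ^ 2)
        - ((∑ s, q s * (Vstar s) ^ 2) - (∑ s, q s * Vstar s) ^ 2)|
      ≤ 4 * H * ∑ s, q s * (Vup s - Vlo s) := by
  set M : S → ℝ := fun s => (Vup s + Vlo s) / 2 with hM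
  set E : ℝ := ∑ s, q s * (Vup s - Vlo s) with hE
  -- second moment difference
  have h1 : |(∑ s, q s * M s ^ 2) - ∑ s, q s * Vstar s ^ 2| ≤ H * E := by
    rw [← Finset.sum_sub_distrib, hE, Finset.mul_sum]
    refine (Finset.abs_sum_le_sum_abs _ _).trans (Finset.sum_le_sum fun s _ => ?_)
    obtain ⟨hu0, hu1⟩ := hup s
    obtain ⟨hl0, hl1⟩ := hlo s
    obtain ⟨hs1, hs2⟩ := hsand s
    rw [abs_le]
    have k1 : (0:ℝ) ≤ (Vup s - Vlo s)/2 - ((Vup s + Vlo s)/2 - Vstar s) := by linarith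
    have k2 : (0:ℝ) ≤ (Vup s - Vlo s)/2 + ((Vup s + Vlo s)/2 - Vstar s) := by linarith
    have k3 : (0:ℝ) ≤ (Vup s + Vlo s)/2 + Vstar s := by linarith
    have k4 : (0:ℝ) ≤ 2*H - ((Vup s + Vlo s)/2 + Vstar s) := by linarith
    have k5 : (0:ℝ) ≤ (Vup s - Vlo s)/2 := by linarith
    constructor <;> simp only [hM] <;>
      nlinarith [mul_nonneg (hq0 s) (mul_nonneg k1 k3),
        mul_nonneg (hq0 s) (mul_nonneg k2 k3),
        mul_nonneg (hq0 s) (mul_nonneg k5 k4)]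
  -- means
  have hma : (∑ s, q s * M s) ≤ H := by
    calc (∑ s, q s * M s) ≤ ∑ s, q s * H :=
          Finset.sum_le_sum fun s _ => by
            have := (hup s).2; have := (hlo s).2
            have := hq0 s; simp only [hM]; nlinarith
      _ = H := by rw [← Finset.sum_mul, hq1, one_mul]
  have hmb : (∑ s, q s * Vstar s) ≤ H := by
    calc (∑ s, q s * Vstar s) ≤ ∑ s, q s * H :=
          Finset.sum_le_sum fun s _ => mul_le_mul_of_nonneg_left (hstar s).2 (hq0 s)
      _ = H := by rw [← Finset.sum_mul, hq1, one_mul]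
  have hma0 : 0 ≤ ∑ s, q s * M s :=
    Finset.sum_nonneg fun s _ => mul_nonneg (hq0 s)
      (by have := (hup s).1; have := (hlo s).1; simp only [hM]; linarith)
  have hmb0 : 0 ≤ ∑ s, q s * Vstar s :=
    Finset.sum_nonneg fun s _ => mul_nonneg (hq0 s) (hstar s).1
  have h2 : |(∑ s, q s * M s) - ∑ s, q s * Vstar s| ≤ E / 2 := by
    rw [← Finset.sum_sub_distrib]
    refine (Finset.abs_sum_le_sum_abs _ _).trans ?_
    have : ∑ s, |q s * M s - q s * Vstar s| ≤ ∑ s, q s * (Vup s - Vlo s) / 2 := by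
      refine Finset.sum_le_sum fun s _ => ?_
      obtain ⟨hs1, hs2⟩ := hsand s
      rw [abs_le]
      constructor <;> simp only [hM] <;> nlinarith [hq0 s]
    rw [hE, Finset.sum_div]
    exact this
  have hE0 : 0 ≤ E :=
    Finset.sum_nonneg fun s _ => mul_nonneg (hq0 s) (by linarith [(hsand s).1, (hsand s).2])
  -- combine
  have h3 : |(∑ s, q s * M s) ^ 2 - (∑ s, q s * Vstar s) ^ 2| ≤ H * E := by
    set a := ∑ s, q s * M s
    set b := ∑ s, q s * Vstar s
    rw [abs_le] at h2 ⊢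
    constructor <;> nlinarith [h2.1, h2.2]
  calc |((∑ s, q s * M s ^ 2) - (∑ s, q s * M s) ^ 2)
        - ((∑ s, q s * (Vstar s) ^ 2) - (∑ s, q s * Vstar s) ^ 2)|
      ≤ |(∑ s, q s * M s ^ 2) - ∑ s, q s * Vstar s ^ 2|
        + |(∑ s, q s * M s) ^ 2 - (∑ s, q s * Vstar s) ^ 2| := by
        rw [show ((∑ s, q s * M s ^ 2) - (∑ s, q s * M s) ^ 2)
            - ((∑ s, q s * (Vstar s) ^ 2) - (∑ s, q s * Vstar s) ^ 2)
          = ((∑ s, q s * M s ^ 2) - ∑ s, q s * Vstar s ^ 2)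
            - ((∑ s, q s * M s) ^ 2 - (∑ s, q s * Vstar s) ^ 2) by ring]
        exact abs_sub _ _
    _ ≤ H * E + H * E := add_le_add h1 h3
    _ ≤ 4 * H * E := by nlinarith
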